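/- Fix β > 0. Let B be a critical block (ℓ(B) ≥ (1+β)s(B), and every proper sub-block B' has ℓ(B') < (1+β)s(B')) of a flip sequence on K_n with s(B) < n, not revisiting any state. Then rank(A_B) ≥ s(B) + (β/(1+β))·s₁(B), and consequently rank(A_B) ≥ ((1+4β)/(1+3β))·s(B). -/

import Mathlib

open Matrix

/-- Flip the spin of vertex `v`. -/
def flipSpin {n : ℕ} (v : Fin n) (σ : Fin n → ℝ) : Fin n → ℝ :=
  fun u => if u = v then -σ u else σ u

/-- The spin configuration obtained from `σ₀` by flipping the vertices of `L` in order. -/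
def evolve {n : ℕ} (σ₀ : Fin n → ℝ) : List (Fin n) → (Fin n → ℝ)
  | [] => σ₀
  | v :: L => evolve (flipSpin v σ₀) L

/-- A spin configuration takes values in `{-1, 1}`. -/
def isSpin {n : ℕ} (σ : Fin n → ℝ) : Prop := ∀ v, σ v = 1 ∨ σ v = -1

/-- The move matrix of a flip sequence `L` from initial configuration `σ₀` on the complete
graph: the `t`-th column is the vector `α_t` of coefficients of the change of the
Hamiltonian at step `t`, i.e. `(α_t)_{u v_t} = σ_{t-1}(v_t) σ_{t-1}(u)` for `u ≠ v_t` and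
`(α_t)_e = 0` for edges `e` not incident to `v_t`.  (Rows are indexed by ordered pairs;
each edge appears as two equal rows, which does not affect the rank.) -/
def moveMatrix {n : ℕ} (σ₀ : Fin n → ℝ) (L : List (Fin n)) :
    Matrix (Fin n × Fin n) (Fin L.length) ℝ :=
  fun e t =>
    if e.1 = L.get t ∧ e.2 ≠ L.get t then
      evolve σ₀ (L.take t.1) (L.get t) * evolve σ₀ (L.take t.1) e.2
    else if e.2 = L.get t ∧ e.1 ≠ L.get t then
      evolve σ₀ (L.take t.1) (L.get t) * evolve σ₀ (L.take t.1) e.1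
    else 0

/-- `s(L)`: the number of distinct vertices appearing in `L`. -/
def sDist {n : ℕ} (L : List (Fin n)) : ℕ := L.toFinset.card

/-- `s₂(L)`: the number of repeated vertices (appearing at least twice) in `L`. -/
def sRep {n : ℕ} (L : List (Fin n)) : ℕ :=
  (L.toFinset.filter fun v => 2 ≤ L.count v).card

/-- `s₁(L)`: the number of singletons (vertices appearing exactly once) in `L`. -/
def sSing {n : ℕ} (L : List (Fin n)) : ℕ :=
  (L.toFinset.filter fun v => L.count v = 1).card

/-- The block `L[i+1, j]` (0-indexed: positions `i, …, j-1`). -/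
def seg {n : ℕ} (L : List (Fin n)) (i j : ℕ) : List (Fin n) := (L.take j).drop i

/-- `L` does not revisit any state: no (nonempty) contiguous block of `L` contains every
vertex an even number of times. -/
def noRevisit {n : ℕ} (L : List (Fin n)) : Prop :=
  ∀ i j : ℕ, i < j → j ≤ L.length → ∃ v, ¬ Even ((seg L i j).count v)

/-- A (nonempty) block `B` is `β`-critical if `ℓ(B) ≥ (1+β) s(B)` and every (nonempty)
block strictly contained in `B` satisfies `ℓ(B') < (1+β) s(B')`. -/
def Critical {n : ℕ} (β : ℝ) (B : List (Fin n)) : Prop :=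
  B ≠ [] ∧ ((1 + β) * (sDist B : ℝ) ≤ (B.length : ℝ)) ∧
    ∀ i j : ℕ, seg B i j ≠ [] → (seg B i j).length < B.length →
      ((seg B i j).length : ℝ) < (1 + β) * (sDist (seg B i j) : ℝ)

namespace Stmt8Aux
open Matrix Submodule Module
variable {n : ℕ}

lemma evolve_apply (σ₀ : Fin n → ℝ) (L : List (Fin n)) (u : Fin n) :
    evolve σ₀ L u = (-1)^(L.count u) * σ₀ u := by
  induction L generalizing σ₀ with
  | nil => simp [evolve]
  | cons v L ih =>
    simp only [evolve, ih, List.count_cons, flipSpin]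
    by_cases h : u = v
    · subst h; simp [pow_succ]
    · simp [h, show ¬ v = u from fun hh => h hh.symm]

/-- counting function -/
def cnt (B : List (Fin n)) (v : Fin n) (t : ℕ) : ℕ := (B.take t).count v

lemma cnt_mono (B : List (Fin n)) (v : Fin n) {t t' : ℕ} (h : t ≤ t') :
    cnt B v t ≤ cnt B v t' := by
  unfold cnt
  have : List.take (t + (t' - t)) B = List.take t B ++ List.take (t' - t) (List.drop t B) := List.take_add
  rw [Nat.add_sub_cancel' h] at this
  rw [this, List.count_append]
  exact Nat.le_add_right _ _

lemma cnt_succ (B : List (Fin n)) (v : Fin n) (t : ℕ) (ht : t < B.length) :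
    cnt B v (t+1) = cnt B v t + if B.get ⟨t, ht⟩ = v then 1 else 0 := by
  unfold cnt
  rw [List.take_succ, List.count_append]
  congr 1
  have h0 : B[t]? = some (B.get ⟨t, ht⟩) := by
    rw [List.getElem?_eq_some_iff]; exact ⟨ht, rfl⟩
  rw [h0]
  rcases eq_or_ne (B.get ⟨t, ht⟩) v with h | h <;>
    simp [List.count_singleton', h]

lemma cnt_len (B : List (Fin n)) (v : Fin n) {t : ℕ} (h : B.length ≤ t) :
    cnt B v t = B.count v := by
  unfold cnt; rw [List.take_of_length_le h]

/-- extraction: if the count strictly increases there is an occurrence -/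
lemma exists_occ (B : List (Fin n)) (v : Fin n) {i j : ℕ}
    (h : cnt B v i < cnt B v j) :
    ∃ t : Fin B.length, i ≤ (t : ℕ) ∧ (t : ℕ) < j ∧ B.get t = v := by
  induction j with
  | zero => simp [cnt] at h
  | succ j ih =>
    by_cases hj : j < B.length
    · have hs := cnt_succ B v j hj
      by_cases hc : B.get ⟨j, hj⟩ = v
      · rw [if_pos hc] at hs
        by_cases h2 : cnt B v i < cnt B v j
        · obtain ⟨t, h1, h2, h3⟩ := ih h2
          exact ⟨t, h1, Nat.lt_succ_of_lt h2, h3⟩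
        · refine ⟨⟨j, hj⟩, show i ≤ j from ?_, Nat.lt_succ_self j, hc⟩
          by_contra hij; push_neg at hij
          have hm := cnt_mono B v (show j+1 ≤ i by omega)
          omega
      · rw [if_neg hc, add_zero] at hs
        rw [hs] at h
        exact (ih h).imp fun t ⟨a,b,c⟩ => ⟨a, Nat.lt_succ_of_lt b, c⟩
    · push_neg at hj
      have h1 : cnt B v (j+1) = cnt B v j := by
        rw [cnt_len B v (show B.length ≤ j+1 by omega), cnt_len B v hj]
      rw [h1] at h
      exact (ih h).imp fun t ⟨a,b,c⟩ => ⟨a, Nat.lt_succ_of_lt b, c⟩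

lemma occ_lt_cnt (B : List (Fin n)) (t : Fin B.length) {j : ℕ} (hj : (t:ℕ) < j) :
    cnt B (B.get t) t + 1 ≤ cnt B (B.get t) j := by
  have h1 := cnt_succ B (B.get t) t t.2
  rw [if_pos rfl] at h1
  have h2 := cnt_mono B (B.get t) (show (t:ℕ)+1 ≤ j by omega)
  omega

lemma cnt_le_count (B : List (Fin n)) (v : Fin n) (t : ℕ) : cnt B v t ≤ B.count v := by
  have h1 := cnt_mono B v (Nat.le_max_left t B.length)
  have h2 : cnt B v (max t B.length) = B.count v := cnt_len B v (Nat.le_max_right _ _)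
  omega


section
variable (σ₀ : Fin n → ℝ) (B : List (Fin n))
lemma card_le_rank (A : Matrix (Fin n × Fin n) (Fin B.length) ℝ) (K : Finset (Fin B.length))
    (h : LinearIndependent ℝ (fun t : K => Aᵀ t)) :
    K.card ≤ A.rank := by
  classical
  rw [Matrix.rank_eq_finrank_span_cols]
  have h1 : Fintype.card K ≤ finrank ℝ (span ℝ (Set.range fun t : K => Aᵀ t)) :=
    le_of_eq (finrank_span_eq_card h).symm
  rw [Fintype.card_coe] at h1
  refine le_trans h1 (Submodule.finrank_mono (span_mono ?_))
  rintro _ ⟨t, rfl⟩; exact ⟨t, rfl⟩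

lemma indep_criterion (A : Matrix (Fin n × Fin n) (Fin B.length) ℝ) (K : Finset (Fin B.length))
    (h : ∀ lam : Fin B.length → ℝ,
      (∀ e, ∑ t ∈ K, lam t * A e t = 0) → ∀ t ∈ K, lam t = 0) :
    LinearIndependent ℝ (fun t : K => Aᵀ t) := by
  classical
  rw [Fintype.linearIndependent_iff]
  intro g hg i
  set lam : Fin B.length → ℝ := fun t => if h : t ∈ K then g ⟨t, h⟩ else 0 with hlam
  have h2 : ∀ e, ∑ t ∈ K, lam t * A e t = 0 := by
    intro e
    have h3 := congrFun hg e
    rw [Finset.sum_apply] at h3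
    rw [← Finset.sum_coe_sort K (fun t => lam t * A e t)]
    have h4 : ∀ i : K, lam (i : Fin B.length) * A e i = g i • (Aᵀ i) e := by
      intro i
      simp [hlam, i.2, Matrix.transpose_apply, mul_comm]
    rw [Finset.sum_congr rfl (fun i _ => h4 i)]
    exact h3
  have h5 := h lam h2 i i.2
  simpa [hlam, i.2] using h5

end
/-- spin value before step t -/
def sg (σ₀ : Fin n → ℝ) (B : List (Fin n)) (t : ℕ) (u : Fin n) : ℝ :=
  evolve σ₀ (B.take t) u

lemma sg_apply (σ₀ : Fin n → ℝ) (B : List (Fin n)) (t : ℕ) (u : Fin n) :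
    sg σ₀ B t u = (-1)^(cnt B u t) * σ₀ u := evolve_apply σ₀ (B.take t) u

variable {σ₀ : Fin n → ℝ} {B : List (Fin n)}

lemma spin_ne (h : isSpin σ₀) (u : Fin n) : σ₀ u ≠ 0 := by
  rcases h u with h1 | h1 <;> rw [h1] <;> norm_num

lemma sg_ne (h : isSpin σ₀) (t : ℕ) (u : Fin n) : sg σ₀ B t u ≠ 0 := by
  rw [sg_apply]
  exact mul_ne_zero (pow_ne_zero _ (by norm_num)) (spin_ne h u)

lemma row_eval (K : Finset (Fin B.length)) (lam : Fin B.length → ℝ)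
    (hcomb : ∀ e : Fin n × Fin n, ∑ t ∈ K, lam t * moveMatrix σ₀ B e t = 0)
    (x w : Fin n) (hxw : x ≠ w) :
    ∑ t ∈ K.filter (fun t => B.get t = x ∨ B.get t = w),
      lam t * (sg σ₀ B t x * sg σ₀ B t w) = 0 := by
  classical
  have h0 := hcomb (x, w)
  rw [← Finset.sum_filter_of_ne (p := fun t => B.get t = x ∨ B.get t = w)] at h0
  · rw [← h0]
    refine Finset.sum_congr rfl ?_
    intro t ht
    rw [Finset.mem_filter] at ht
    rcases ht.2 with h1 | h1
    · have : moveMatrix σ₀ B (x, w) t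
          = evolve σ₀ (B.take t.1) (B.get t) * evolve σ₀ (B.take t.1) w := by
        unfold moveMatrix
        rw [if_pos ⟨h1.symm, show w ≠ B.get t from fun hh => hxw (hh.trans h1).symm⟩]
      rw [this, h1]; rfl
    · have hne : ¬ (x = B.get t ∧ w ≠ B.get t) := by
        rintro ⟨h2, h3⟩; exact h3 h1.symm
      have : moveMatrix σ₀ B (x, w) t
          = evolve σ₀ (B.take t.1) (B.get t) * evolve σ₀ (B.take t.1) x := by
        unfold moveMatrix
        rw [if_neg hne, if_pos ⟨h1.symm, show x ≠ B.get t from fun hh => hxw (hh.trans h1)⟩]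
      rw [this, h1]
      show lam t * (sg σ₀ B t x * sg σ₀ B t w) = lam t * (sg σ₀ B t w * sg σ₀ B t x)
      ring
  · intro t _ hne
    by_contra hc; push_neg at hc
    apply hne
    have : moveMatrix σ₀ B (x, w) t = 0 := by
      unfold moveMatrix
      rw [if_neg, if_neg]
      · rintro ⟨h2, _⟩; exact hc.2 h2.symm
      · rintro ⟨h2, _⟩; exact hc.1 h2.symm
    rw [this, mul_zero]



/-- the triangular ±1 system has only the zero solution -/
lemma sign_system {m : ℕ} (μ : ℕ → ℝ)
    (h : ∀ i < m, ∑ j ∈ Finset.range m, μ j * (if j ≤ i then 1 else -1) = 0) :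
    ∀ j < m, μ j = 0 := by
  have key : ∀ i, i + 1 < m → μ (i+1) = 0 := by
    intro i hi
    have h1 := h i (by omega)
    have h2 := h (i+1) hi
    have h3 : ∑ j ∈ Finset.range m,
        (μ j * (if j ≤ i+1 then 1 else -1) - μ j * (if j ≤ i then 1 else -1)) = 0 := by
      rw [Finset.sum_sub_distrib, h1, h2]; ring
    rw [Finset.sum_eq_single (i+1)] at h3
    · rw [if_pos (le_refl _), if_neg (by omega)] at h3; linarith
    · intro j _ hj
      by_cases hji : j ≤ i
      · rw [if_pos (by omega : j ≤ i+1), if_pos hji]; ring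
      · rw [if_neg (by omega : ¬ j ≤ i+1), if_neg hji]; ring
    · intro hni; exact absurd (Finset.mem_range.mpr hi) (fun c => hni c)
  intro j hj
  match j, hj with
  | j+1, hj => exact key j hj
  | 0, hj =>
    have h1 := h (m-1) (by omega)
    rw [Finset.sum_eq_single 0] at h1
    · rw [if_pos (by omega)] at h1; linarith
    · intro j hjm hj0
      rw [Finset.mem_range] at hjm
      have : μ j = 0 := by
        match j, hj0 with
        | j+1, _ => exact key j hjm
      rw [this]; ring
    · intro hn; exact absurd (Finset.mem_range.mpr (by omega)) hn

/-- a nondegenerate 2x2 homogeneous system has only the zero solution -/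
lemma two_by_two {P Q P' Q' l1 l2 : ℝ} (h1 : l1 * P + l2 * Q = 0)
    (h2 : l1 * P' + l2 * Q' = 0) (hdet : P * Q' - Q * P' ≠ 0) :
    l1 = 0 ∧ l2 = 0 := by
  constructor
  · have : l1 * (P * Q' - Q * P') = (l1 * P + l2 * Q) * Q' - (l1 * P' + l2 * Q') * Q := by ring
    rw [h1, h2] at this
    simp at this
    rcases this with h | h
    · exact h
    · exact absurd h hdet
  · have : l2 * (P * Q' - Q * P') = (l1 * P' + l2 * Q') * P - (l1 * P + l2 * Q) * P' := by ring
    rw [h1, h2] at this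
    simp at this
    rcases this with h | h
    · exact h
    · exact absurd h hdet

end Stmt8Aux

namespace Stmt8Aux
open Matrix Submodule Module
variable {n : ℕ}

section PartA
variable (B : List (Fin n))

/-- position of a letter occurring exactly once -/
def isSP (q : Fin B.length) : Prop := B.count (B.get q) = 1

instance : DecidablePred (isSP B) := fun q => by unfold isSP; infer_instance

/-- chosen columns: singleton positions, and first occurrences of a letter after
a singleton position -/
def chosenA (t : Fin B.length) : Prop :=
  isSP B t ∨ ∀ t' : Fin B.length, t' < t → B.get t' = B.get t →
    ∃ q : Fin B.length, t' < q ∧ q < t ∧ isSP B q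

instance : DecidablePred (chosenA B) := fun t => by unfold chosenA; infer_instance

def KA : Finset (Fin B.length) := Finset.univ.filter (chosenA B)

def QS : Finset (Fin B.length) := Finset.univ.filter (isSP B)

lemma mem_KA {B : List (Fin n)} {t : Fin B.length} : t ∈ KA B ↔ chosenA B t := by
  unfold KA; simp

lemma mem_QS {B : List (Fin n)} {t : Fin B.length} : t ∈ QS B ↔ isSP B t := by
  unfold QS; simp

lemma QS_subset_KA : QS B ⊆ KA B := by
  intro q hq; rw [mem_QS] at hq; rw [mem_KA]; exact Or.inl hq

variable {B}

lemma get_count_pos (t : Fin B.length) : 1 ≤ B.count (B.get t) := by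
  have h1 := occ_lt_cnt B t t.2
  have h2 : cnt B (B.get t) B.length = B.count (B.get t) := cnt_len B _ (le_refl _)
  omega

lemma two_occ {t t' : Fin B.length} (h : t < t') (he : B.get t = B.get t') :
    2 ≤ B.count (B.get t) := by
  have h1 := occ_lt_cnt B t (show (t:ℕ) < (t':ℕ) from h)
  have h2 := occ_lt_cnt B t' t'.2
  rw [← he] at h2
  have h3 : cnt B (B.get t) B.length = B.count (B.get t) := cnt_len B _ (le_refl _)
  omega

lemma occ_unique {q t : Fin B.length} (hq : B.count (B.get q) = 1)
    (he : B.get t = B.get q) : t = q := by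
  by_contra hne
  rcases lt_or_gt_of_ne hne with h | h
  · have := two_occ h he; rw [he] at this; omega
  · have := two_occ h he.symm; omega

lemma seg_length (i j : ℕ) : (seg B i j).length = min j B.length - i := by
  simp [seg]

lemma seg_get {i j : ℕ} (t : Fin B.length) (h1 : i ≤ (t:ℕ)) (h2 : (t:ℕ) < j) :
    B.get t ∈ seg B i j := by
  have hlen : (t:ℕ) - i < (seg B i j).length := by
    rw [seg_length]; have := t.2; omega
  have he : (seg B i j)[(t:ℕ) - i]'hlen = B.get t := by
    simp only [seg, List.getElem_drop, List.getElem_take]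
    congr 1; have := t.2; omega
  rw [← he]; exact List.getElem_mem _

lemma seg_mem {i j : ℕ} (hj : j ≤ B.length) {v : Fin n} (hv : v ∈ seg B i j) :
    ∃ t : Fin B.length, i ≤ (t:ℕ) ∧ (t:ℕ) < j ∧ B.get t = v := by
  obtain ⟨r, hr, he⟩ := List.getElem_of_mem hv
  rw [seg_length] at hr
  have hrl : i + r < B.length := by omega
  refine ⟨⟨i + r, hrl⟩, show i ≤ i + r from Nat.le_add_right i r,
    show i + r < j from by omega, ?_⟩
  rw [← he]
  simp only [seg, List.getElem_drop, List.getElem_take]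
  rfl

lemma cnt_seg {v : Fin n} (i j : ℕ) (hij : i ≤ j) :
    (seg B i j).count v + cnt B v i = cnt B v j := by
  unfold seg cnt
  conv_rhs => rw [← List.take_append_drop i (B.take j)]
  rw [List.count_append, List.take_take, min_eq_left hij, add_comm]

/-- the chosen non-singleton columns in a transition biject with distinct letters -/
lemma trans_count (i j : ℕ) (hj : j ≤ B.length)
    (hnos : ∀ t : Fin B.length, i ≤ (t:ℕ) → (t:ℕ) < j → ¬ isSP B t)
    (hb : i = 0 ∨ ∃ h : i-1 < B.length, 1 ≤ i ∧ B.count (B.get ⟨i-1, h⟩) = 1) :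
    (((KA B) \ (QS B)).filter (fun t : Fin B.length => i ≤ (t:ℕ) ∧ (t:ℕ) < j)).card
      = sDist (seg B i j) := by
  classical
  unfold sDist
  apply Finset.card_bij (fun t _ => B.get t)
  · intro t ht
    rw [Finset.mem_filter] at ht
    rw [List.mem_toFinset]
    exact seg_get t ht.2.1 ht.2.2
  · intro t ht t' ht' he
    rw [Finset.mem_filter, Finset.mem_sdiff, mem_KA, mem_QS] at ht ht'
    by_contra hne
    have hcht : chosenA B t := ht.1.1
    have hcht' : chosenA B t' := ht'.1.1
    unfold chosenA at hcht hcht'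
    rcases lt_or_gt_of_ne hne with h | h
    · rcases hcht' with hsp | hch
      · exact ht'.1.2 hsp
      · obtain ⟨q, hq1, hq2, hq3⟩ := hch t h he
        exact hnos q (le_trans ht.2.1 (le_of_lt hq1)) (lt_trans hq2 ht'.2.2) hq3
    · rcases hcht with hsp | hch
      · exact ht.1.2 hsp
      · obtain ⟨q, hq1, hq2, hq3⟩ := hch t' h he.symm
        exact hnos q (le_trans ht'.2.1 (le_of_lt hq1)) (lt_trans hq2 ht.2.2) hq3
  · intro v hv
    rw [List.mem_toFinset] at hv
    have hne : (Finset.univ.filter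
        (fun t : Fin B.length => i ≤ (t:ℕ) ∧ (t:ℕ) < j ∧ B.get t = v)).Nonempty := by
      obtain ⟨t, h1, h2, h3⟩ := seg_mem hj hv
      exact ⟨t, by rw [Finset.mem_filter]; exact ⟨Finset.mem_univ _, h1, h2, h3⟩⟩
    set t := _root_.Finset.min' _ hne with hts
    have htmem := Finset.min'_mem _ hne
    rw [Finset.mem_filter] at htmem
    obtain ⟨-, ht1, ht2, ht3⟩ := htmem
    have hnsp : ¬ isSP B t := hnos t ht1 ht2
    refine ⟨t, ?_, ht3⟩
    rw [Finset.mem_filter, Finset.mem_sdiff, mem_KA, mem_QS]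
    refine ⟨⟨Or.inr ?_, hnsp⟩, ht1, ht2⟩
    intro t' hlt hget
    by_cases hcase : i ≤ (t':ℕ)
    · exfalso
      have : t' ∈ Finset.univ.filter
          (fun t : Fin B.length => i ≤ (t:ℕ) ∧ (t:ℕ) < j ∧ B.get t = v) := by
        rw [Finset.mem_filter]
        exact ⟨Finset.mem_univ _, hcase, lt_trans hlt ht2, hget.trans ht3⟩
      have := Finset.min'_le _ _ this
      rw [← hts] at this
      exact absurd hlt (not_lt.mpr this)
    · push_neg at hcase
      rcases hb with rfl | ⟨hlen, hi1, hsp⟩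
      · omega
      · refine ⟨⟨i-1, hlen⟩, show (t':ℕ) < i - 1 from ?_,
          show (i-1:ℕ) < (t:ℕ) from by omega, hsp⟩
        have hne' : (t':ℕ) ≠ i - 1 := by
          intro hc
          have hgg := congrArg B.get (Fin.ext hc : t' = ⟨i-1, hlen⟩)
          rw [← hgg, hget, ht3] at hsp
          have h2 : ¬ isSP B t := hnos t ht1 ht2
          unfold isSP at h2
          rw [ht3] at h2
          exact h2 hsp
        omega

lemma KA_image : (KA B).image (fun t => B.get t) = B.toFinset := by
  classical
  ext v
  constructor
  · intro hv
    rw [Finset.mem_image] at hv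
    obtain ⟨t, _, rfl⟩ := hv
    rw [List.mem_toFinset]
    exact B.get_mem t
  · intro hv
    rw [List.mem_toFinset] at hv
    have hc : 0 < B.count v := List.count_pos_iff.mpr hv
    have hcc : cnt B v 0 < cnt B v B.length := by
      rw [cnt_len B v (le_refl _)]
      simpa [cnt] using hc
    obtain ⟨t0, _, _, ht3⟩ := exists_occ B v hcc
    have hne : (Finset.univ.filter (fun t : Fin B.length => B.get t = v)).Nonempty :=
      ⟨t0, by rw [Finset.mem_filter]; exact ⟨Finset.mem_univ _, ht3⟩⟩
    set t := Finset.min' _ hne with hts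
    have htmem := Finset.min'_mem _ hne
    rw [Finset.mem_filter] at htmem
    rw [Finset.mem_image]
    refine ⟨t, ?_, htmem.2⟩
    rw [mem_KA]
    right
    intro t' hlt hget
    exfalso
    have ht' : t' ∈ Finset.univ.filter (fun t : Fin B.length => B.get t = v) := by
      rw [Finset.mem_filter]; exact ⟨Finset.mem_univ _, by rw [hget, htmem.2]⟩
    have := Finset.min'_le _ _ ht'
    rw [← hts] at this
    exact absurd hlt (not_lt.mpr this)

lemma sDist_le_KA_card : sDist B ≤ (KA B).card := by
  classical
  unfold sDist
  rw [← KA_image]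
  exact Finset.card_image_le

lemma QS_card : (QS B).card = sSing B := by
  classical
  unfold sSing
  apply Finset.card_bij (fun q _ => B.get q)
  · intro q hq
    rw [mem_QS] at hq
    rw [Finset.mem_filter, List.mem_toFinset]
    exact ⟨B.get_mem q, hq⟩
  · intro q hq q' hq' he
    rw [mem_QS] at hq'
    exact occ_unique hq' he
  · intro v hv
    rw [Finset.mem_filter, List.mem_toFinset] at hv
    have hc : 0 < B.count v := List.count_pos_iff.mpr hv.1
    have hcc : cnt B v 0 < cnt B v B.length := by
      rw [cnt_len B v (le_refl _)]
      simpa [cnt] using hc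
    obtain ⟨t0, _, _, ht3⟩ := exists_occ B v hcc
    refine ⟨t0, ?_, ht3⟩
    rw [mem_QS]
    unfold isSP
    rw [ht3]
    exact hv.2

lemma nat_split {L j i : ℕ} (h1 : i ≤ j) (h2 : j < L) :
    L - i = (j - i) + 1 + (L - (j+1)) := by omega

lemma count_main {β : ℝ} (hβ : 0 < β)
    (hcrit : ∀ i j : ℕ, seg B i j ≠ [] → (seg B i j).length < B.length →
      ((seg B i j).length : ℝ) < (1 + β) * (sDist (seg B i j) : ℝ))
    (hs1 : (QS B).Nonempty) :
    ∀ k i, i ≤ B.length → B.length - i ≤ k →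
      (i = 0 ∨ ∃ h : i-1 < B.length, 1 ≤ i ∧ B.count (B.get ⟨i-1, h⟩) = 1) →
      ((B.length - i : ℕ) : ℝ) ≤
        (((QS B).filter (fun q : Fin B.length => i ≤ (q:ℕ))).card : ℝ)
        + (1+β) * ((((KA B) \ (QS B)).filter (fun t : Fin B.length => i ≤ (t:ℕ))).card : ℝ) := by
  classical
  intro k
  induction k with
  | zero =>
    intro i hi hk _
    have hieq : i = B.length := by omega
    subst hieq
    simp only [Nat.sub_self, Nat.cast_zero]
    positivity
  | succ k ih =>
    intro i hi hk hb
    by_cases hil : i = B.length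
    · subst hil
      simp only [Nat.sub_self, Nat.cast_zero]
      positivity
    have hil' : i < B.length := by omega
    by_cases hF : (((QS B).filter (fun q : Fin B.length => i ≤ (q:ℕ)))).Nonempty
    · -- there is a singleton position ≥ i
      set jF := Finset.min' _ hF with hjdef
      have hjmem := Finset.min'_mem _ hF
      rw [Finset.mem_filter, mem_QS] at hjmem
      obtain ⟨hjQS', hij'⟩ := hjmem
      have hjQS : isSP B jF := hjQS'
      have hij : i ≤ (jF:ℕ) := hij'
      clear hjQS' hij'
      have hjlt : (jF:ℕ) < B.length := jF.2
      have hnos : ∀ t : Fin B.length, i ≤ (t:ℕ) → (t:ℕ) < (jF:ℕ) → ¬ isSP B t := by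
        intro t h1 h2 hsp
        have : t ∈ (QS B).filter (fun q : Fin B.length => i ≤ (q:ℕ)) := by
          rw [Finset.mem_filter, mem_QS]; exact ⟨hsp, h1⟩
        have := Finset.min'_le _ _ this
        rw [← hjdef] at this
        have : (jF:ℕ) ≤ (t:ℕ) := this
        omega
      have htc := trans_count i (jF:ℕ) (le_of_lt hjlt) hnos hb
      have hseg : (((jF:ℕ) - i : ℕ) : ℝ) ≤ (1+β) * (sDist (seg B i (jF:ℕ)) : ℝ) := by
        rcases Nat.lt_or_ge i (jF:ℕ) with hlt | hge
        · have hlen : (seg B i (jF:ℕ)).length = (jF:ℕ) - i := by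
            rw [seg_length, min_eq_left (le_of_lt hjlt)]
          have hnn : seg B i (jF:ℕ) ≠ [] := by
            intro hc; rw [hc] at hlen; simp at hlen; omega
          have hpr : (seg B i (jF:ℕ)).length < B.length := by omega
          have := hcrit i (jF:ℕ) hnn hpr
          rw [hlen] at this
          exact le_of_lt this
        · have : ((jF:ℕ) - i : ℕ) = 0 := by omega
          rw [this]
          simp only [Nat.cast_zero]
          positivity
      have hjsp' : B.count (B.get ⟨(jF:ℕ)+1-1, by simpa using hjlt⟩) = 1 := by
        have hfe : (⟨(jF:ℕ)+1-1, by simpa using hjlt⟩ : Fin B.length) = jF :=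
          Fin.ext (by simp)
        rw [hfe]
        exact hjQS
      have hrec := ih ((jF:ℕ)+1) (Nat.succ_le_of_lt hjlt)
        (by omega)
        (Or.inr ⟨by simpa using hjlt, by omega, hjsp'⟩)
      -- split the singleton count
      have hQsplit : (QS B).filter (fun q : Fin B.length => i ≤ (q:ℕ))
          = insert jF ((QS B).filter (fun q : Fin B.length => (jF:ℕ)+1 ≤ (q:ℕ))) := by
        ext q
        rw [Finset.mem_insert, Finset.mem_filter, Finset.mem_filter]
        constructor
        · rintro ⟨h1, h2⟩
          by_cases hq : q = jF
          · exact Or.inl hq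
          · right
            refine ⟨h1, ?_⟩
            have hqmem : q ∈ (QS B).filter (fun q : Fin B.length => i ≤ (q:ℕ)) := by
              rw [Finset.mem_filter]; exact ⟨h1, h2⟩
            have h3 : (jF:ℕ) ≤ (q:ℕ) := Finset.min'_le _ q hqmem
            have h4 : (jF:ℕ) ≠ (q:ℕ) := fun hc => hq (Fin.ext hc.symm)
            omega
        · rintro (rfl | ⟨h1, h2⟩)
          · exact ⟨mem_QS.mpr hjQS, hij⟩
          · exact ⟨h1, by omega⟩
      have hQcard : (((QS B).filter (fun q : Fin B.length => i ≤ (q:ℕ))).card : ℝ)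
          = 1 + (((QS B).filter (fun q : Fin B.length => (jF:ℕ)+1 ≤ (q:ℕ))).card : ℝ) := by
        rw [hQsplit, Finset.card_insert_of_notMem]
        · push_cast; ring
        · rw [Finset.mem_filter]
          rintro ⟨-, hc⟩
          omega
      -- split the chosen count
      have hKsplit : ((KA B) \ (QS B)).filter (fun t : Fin B.length => i ≤ (t:ℕ))
          = (((KA B) \ (QS B)).filter (fun t : Fin B.length => i ≤ (t:ℕ) ∧ (t:ℕ) < (jF:ℕ)))
            ∪ (((KA B) \ (QS B)).filter (fun t : Fin B.length => (jF:ℕ)+1 ≤ (t:ℕ))) := by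
        ext t
        rw [Finset.mem_union, Finset.mem_filter, Finset.mem_filter, Finset.mem_filter]
        constructor
        · rintro ⟨h1, h2⟩
          have htne : t ≠ jF := by
            intro hc
            rw [Finset.mem_sdiff] at h1
            exact h1.2 (by rw [hc, mem_QS]; exact hjQS)
          have : (t:ℕ) ≠ (jF:ℕ) := fun hc => htne (Fin.ext hc)
          rcases Nat.lt_or_ge (t:ℕ) (jF:ℕ) with hlt | hge
          · exact Or.inl ⟨h1, h2, hlt⟩
          · exact Or.inr ⟨h1, by omega⟩
        · rintro (⟨h1, h2, _⟩ | ⟨h1, h2⟩)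
          · exact ⟨h1, h2⟩
          · exact ⟨h1, by omega⟩
      have hKdisj : Disjoint
          (((KA B) \ (QS B)).filter (fun t : Fin B.length => i ≤ (t:ℕ) ∧ (t:ℕ) < (jF:ℕ)))
          (((KA B) \ (QS B)).filter (fun t : Fin B.length => (jF:ℕ)+1 ≤ (t:ℕ))) := by
        rw [Finset.disjoint_filter]
        rintro t _ ⟨-, h2⟩
        omega
      have hKcard : ((((KA B) \ (QS B)).filter (fun t : Fin B.length => i ≤ (t:ℕ))).card : ℝ)
          = (sDist (seg B i (jF:ℕ)) : ℝ)
            + ((((KA B) \ (QS B)).filter (fun t : Fin B.length => (jF:ℕ)+1 ≤ (t:ℕ))).card : ℝ) := by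
        rw [hKsplit, Finset.card_union_of_disjoint hKdisj, htc]
        push_cast; ring
      have hLHS : ((B.length - i : ℕ) : ℝ)
          = (((jF:ℕ) - i : ℕ) : ℝ) + 1 + ((B.length - ((jF:ℕ)+1) : ℕ) : ℝ) := by
        rw [nat_split hij hjlt]; push_cast; ring
      rw [hLHS, hQcard, hKcard]
      have h1β : (0:ℝ) < 1 + β := by linarith
      nlinarith [hseg, hrec]
    · -- no singleton position ≥ i
      have hfe : ((QS B).filter (fun q : Fin B.length => i ≤ (q:ℕ))) = ∅ :=
        Finset.not_nonempty_iff_eq_empty.mp hF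
      have hi1 : 1 ≤ i := by
        obtain ⟨q, hq⟩ := hs1
        by_contra hc
        push_neg at hc
        have : q ∈ (QS B).filter (fun q : Fin B.length => i ≤ (q:ℕ)) := by
          rw [Finset.mem_filter]; exact ⟨hq, by omega⟩
        rw [hfe] at this
        exact absurd this (Finset.notMem_empty q)
      have hnos : ∀ t : Fin B.length, i ≤ (t:ℕ) → (t:ℕ) < B.length → ¬ isSP B t := by
        intro t h1 _ hsp
        have : t ∈ (QS B).filter (fun q : Fin B.length => i ≤ (q:ℕ)) := by
          rw [Finset.mem_filter, mem_QS]; exact ⟨hsp, h1⟩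
        rw [hfe] at this
        exact absurd this (Finset.notMem_empty t)
      have htc := trans_count i B.length (le_refl _) hnos hb
      have hff : (((KA B) \ (QS B)).filter (fun t : Fin B.length => i ≤ (t:ℕ) ∧ (t:ℕ) < B.length))
          = (((KA B) \ (QS B)).filter (fun t : Fin B.length => i ≤ (t:ℕ))) := by
        apply Finset.filter_congr
        intro t _
        simp [t.2]
      rw [hff] at htc
      have hlen : (seg B i B.length).length = B.length - i := by
        rw [seg_length, Nat.min_self]
      have hnn : seg B i B.length ≠ [] := by
        intro hc; rw [hc] at hlen; simp at hlen; omega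
      have hpr : (seg B i B.length).length < B.length := by omega
      have := hcrit i B.length hnn hpr
      rw [hlen] at this
      rw [hfe]
      simp only [Finset.card_empty, Nat.cast_zero, zero_add]
      rw [htc]
      exact le_of_lt this


section Indep
variable {σ₀ : Fin n → ℝ}

lemma indepA (hσ : isSpin σ₀) (w₀ : Fin n) (hw₀ : B.count w₀ = 0) :
    ∀ lam : Fin B.length → ℝ,
      (∀ e, ∑ t ∈ KA B, lam t * moveMatrix σ₀ B e t = 0) →
      ∀ t ∈ KA B, lam t = 0 := by
  classical
  intro lam hcomb
  have hitw : ∀ t : Fin B.length, B.get t ≠ w₀ := by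
    intro t hc
    have := get_count_pos t
    rw [hc, hw₀] at this
    omega
  -- Step 1: coefficients at singleton positions vanish
  have hsz : ∀ q ∈ KA B, isSP B q → lam q = 0 := by
    intro q hqK hq
    have heq := row_eval (KA B) lam hcomb (B.get q) w₀ (hitw q)
    have hfil : (KA B).filter
        (fun t : Fin B.length => B.get t = B.get q ∨ B.get t = w₀) = {q} := by
      ext t
      rw [Finset.mem_filter, Finset.mem_singleton]
      constructor
      · rintro ⟨htK, h1 | h1⟩
        · exact occ_unique hq h1
        · exact absurd h1 (hitw t)
      · rintro rfl; exact ⟨hqK, Or.inl rfl⟩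
    rw [hfil, Finset.sum_singleton] at heq
    have h2 : sg σ₀ B (q:ℕ) (B.get q) * sg σ₀ B (q:ℕ) w₀ ≠ 0 :=
      mul_ne_zero (sg_ne hσ (q:ℕ) (B.get q)) (sg_ne hσ (q:ℕ) w₀)
    rcases mul_eq_zero.mp heq with h | h
    · exact h
    · exact absurd h h2
  -- Step 2: coefficients at chosen occurrences of a repeated letter vanish
  have hrz : ∀ v : Fin n, 2 ≤ B.count v →
      ∀ t ∈ (KA B).filter (fun t : Fin B.length => B.get t = v), lam t = 0 := by
    intro v hv
    set Tv := (KA B).filter (fun t : Fin B.length => B.get t = v) with hTvdef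
    set m := Tv.card with hm
    set e : Fin m ≃o {x // x ∈ Tv} := Tv.orderIsoOfFin rfl with he
    have hemem : ∀ j : Fin m, ((e j : {x // x ∈ Tv}) : Fin B.length) ∈ Tv :=
      fun j => (e j).2
    have hgete : ∀ j : Fin m, B.get ((e j : {x // x ∈ Tv}) : Fin B.length) = v := by
      intro j
      have h1 : ((e j : {x // x ∈ Tv}) : Fin B.length)
          ∈ (KA B).filter (fun t : Fin B.length => B.get t = v) := hemem j
      rw [Finset.mem_filter] at h1
      exact h1.2
    have heKA : ∀ j : Fin m, ((e j : {x // x ∈ Tv}) : Fin B.length) ∈ KA B := by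
      intro j
      have h1 : ((e j : {x // x ∈ Tv}) : Fin B.length)
          ∈ (KA B).filter (fun t : Fin B.length => B.get t = v) := hemem j
      rw [Finset.mem_filter] at h1
      exact h1.1
    have hemono : ∀ {j j' : Fin m}, j ≤ j' →
        (((e j : {x // x ∈ Tv}) : Fin B.length) : ℕ)
          ≤ (((e j' : {x // x ∈ Tv}) : Fin B.length) : ℕ) := by
      intro j j' hjj
      have h1 : (e j) ≤ (e j') := e.le_iff_le.mpr hjj
      exact h1
    have hemonos : ∀ {j j' : Fin m}, j < j' →
        (((e j : {x // x ∈ Tv}) : Fin B.length) : ℕ)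
          < (((e j' : {x // x ∈ Tv}) : Fin B.length) : ℕ) := by
      intro j j' hjj
      have h1 : (e j) < (e j') := e.lt_iff_lt.mpr hjj
      exact h1
    have hbetween : ∀ j j' : Fin m, j < j' → ∃ q : Fin B.length,
        (((e j : {x // x ∈ Tv}) : Fin B.length) : ℕ) < (q:ℕ)
        ∧ (q:ℕ) < (((e j' : {x // x ∈ Tv}) : Fin B.length) : ℕ) ∧ isSP B q := by
      intro j j' hjj
      have hch : chosenA B ((e j' : {x // x ∈ Tv}) : Fin B.length) :=
        mem_KA.mp (heKA j')
      unfold chosenA at hch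
      rcases hch with hsp | hch
      · exfalso
        unfold isSP at hsp
        rw [hgete j'] at hsp
        omega
      · obtain ⟨q, hq1, hq2, hq3⟩ := hch ((e j : {x // x ∈ Tv}) : Fin B.length)
          (by exact hemonos hjj) (by rw [hgete j, hgete j'])
        exact ⟨q, hq1, hq2, hq3⟩
    set μ : ℕ → ℝ := fun j =>
      if hj : j < m then
        lam ((e ⟨j, hj⟩ : {x // x ∈ Tv}) : Fin B.length)
          * sg σ₀ B (((e ⟨j, hj⟩ : {x // x ∈ Tv}) : Fin B.length) : ℕ) v
      else 0 with hμ
    -- the system of equations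
    have hEq : ∀ i : Fin m,
        ∑ j ∈ Finset.range m, μ j * (if j ≤ (i:ℕ) then 1 else -1) = 0 := by
      intro i
      -- construct the separating vertex y
      obtain ⟨y, hyv, hyzero, hsgy⟩ :
          ∃ y : Fin n, y ≠ v
            ∧ (∀ t ∈ KA B, B.get t = y → lam t = 0)
            ∧ ∀ j : Fin m, sg σ₀ B (((e j : {x // x ∈ Tv}) : Fin B.length) : ℕ) y
                = (if (j:ℕ) ≤ (i:ℕ) then 1 else -1) * σ₀ y := by
        by_cases hP : ∃ q : Fin B.length,
            (((e i : {x // x ∈ Tv}) : Fin B.length) : ℕ) < (q:ℕ) ∧ isSP B q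
        · -- there is a singleton position after e i; take the least one
          have hne : (Finset.univ.filter (fun q : Fin B.length =>
              (((e i : {x // x ∈ Tv}) : Fin B.length) : ℕ) < (q:ℕ) ∧ isSP B q)).Nonempty := by
            obtain ⟨q, h1, h2⟩ := hP
            exact ⟨q, by rw [Finset.mem_filter]; exact ⟨Finset.mem_univ _, h1, h2⟩⟩
          set qi := Finset.min' _ hne with hqidef
          have hqimem := Finset.min'_mem _ hne
          rw [Finset.mem_filter] at hqimem
          obtain ⟨-, hqi1x, hqi2x⟩ := hqimem
          have hqi1 : (((e i : {x // x ∈ Tv}) : Fin B.length) : ℕ) < (qi:ℕ) := hqi1x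
          have hqi2 : B.count (B.get qi) = 1 := hqi2x
          clear hqi1x hqi2x
          refine ⟨B.get qi, ?_, ?_, ?_⟩
          · intro hc
            rw [hc] at hqi2
            omega
          · intro t htK hty
            apply hsz t htK
            unfold isSP
            rw [hty]
            exact hqi2
          · intro j
            rw [sg_apply]
            by_cases hji : (j:ℕ) ≤ (i:ℕ)
            · rw [if_pos hji]
              have hje : (((e j : {x // x ∈ Tv}) : Fin B.length) : ℕ)
                  ≤ (((e i : {x // x ∈ Tv}) : Fin B.length) : ℕ) :=
                hemono (by exact hji)
              have hcnt0 : cnt B (B.get qi) (((e j : {x // x ∈ Tv}) : Fin B.length) : ℕ) = 0 := by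
                by_contra hc
                have hcpos : 0 < cnt B (B.get qi) (((e j : {x // x ∈ Tv}) : Fin B.length) : ℕ) := by omega
                have hz : cnt B (B.get qi) 0 = 0 := by simp [cnt]
                obtain ⟨r, -, hr2, hr3⟩ := exists_occ B (B.get qi) (by omega :
                  cnt B (B.get qi) 0 < cnt B (B.get qi) (((e j : {x // x ∈ Tv}) : Fin B.length) : ℕ))
                have := occ_unique hqi2 hr3
                subst this
                omega
              rw [hcnt0, pow_zero]
            · rw [if_neg hji]
              push_neg at hji
              have hii1 : (i:ℕ) + 1 < m := by
                have := j.2; omega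
              have hlt : i < (⟨(i:ℕ)+1, hii1⟩ : Fin m) := by
                rw [Fin.lt_def]; simp
              obtain ⟨q', hq'1, hq'2, hq'3⟩ := hbetween i ⟨(i:ℕ)+1, hii1⟩ hlt
              have hqile : (qi : ℕ) ≤ (q' : ℕ) := by
                have : q' ∈ Finset.univ.filter (fun q : Fin B.length =>
                    (((e i : {x // x ∈ Tv}) : Fin B.length) : ℕ) < (q:ℕ) ∧ isSP B q) := by
                  rw [Finset.mem_filter]
                  exact ⟨Finset.mem_univ _, hq'1, hq'3⟩
                exact Finset.min'_le _ _ this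
              have hlt2 : (qi : ℕ) < (((e j : {x // x ∈ Tv}) : Fin B.length) : ℕ) := by
                have hj1 : (⟨(i:ℕ)+1, hii1⟩ : Fin m) ≤ j := by
                  rw [Fin.le_def]; simp; omega
                have := hemono hj1
                omega
              have hcnt1 : cnt B (B.get qi) (((e j : {x // x ∈ Tv}) : Fin B.length) : ℕ) = 1 := by
                have hlb := occ_lt_cnt B qi hlt2
                have hub := cnt_le_count B (B.get qi) (((e j : {x // x ∈ Tv}) : Fin B.length) : ℕ)
                omega
              rw [hcnt1, pow_one]
        · -- no singleton position after e i : use the outside vertex w₀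
          push_neg at hP
          refine ⟨w₀, ?_, ?_, ?_⟩
          · intro hc
            rw [hc] at hw₀
            omega
          · intro t htK hty
            exact absurd hty (hitw t)
          · intro j
            have hji : (j:ℕ) ≤ (i:ℕ) := by
              by_contra hc
              push_neg at hc
              have hii1 : (i:ℕ) + 1 < m := by
                have := j.2; omega
              have hlt : i < (⟨(i:ℕ)+1, hii1⟩ : Fin m) := by
                rw [Fin.lt_def]; simp
              obtain ⟨q', hq'1, hq'2, hq'3⟩ := hbetween i ⟨(i:ℕ)+1, hii1⟩ hlt
              exact absurd hq'3 (hP q' hq'1)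
            rw [if_pos hji, sg_apply]
            have hcnt0 : cnt B w₀ (((e j : {x // x ∈ Tv}) : Fin B.length) : ℕ) = 0 := by
              have := cnt_le_count B w₀ (((e j : {x // x ∈ Tv}) : Fin B.length) : ℕ)
              omega
            rw [hcnt0, pow_zero]
      -- the row equation at (v, y)
      have heq := row_eval (KA B) lam hcomb v y (fun hc => hyv hc.symm)
      set Gy := (KA B).filter (fun t : Fin B.length => B.get t = y) with hGydef
      have hsplit : (KA B).filter (fun t : Fin B.length => B.get t = v ∨ B.get t = y)
          = Tv ∪ Gy := by
        ext t
        rw [Finset.mem_filter, Finset.mem_union, hTvdef, hGydef,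
          Finset.mem_filter, Finset.mem_filter]
        tauto
      have hdisj : Disjoint Tv Gy := by
        rw [Finset.disjoint_left]
        intro t ht1 ht2
        rw [hTvdef, Finset.mem_filter] at ht1
        rw [hGydef, Finset.mem_filter] at ht2
        have : y = v := by rw [← ht2.2, ht1.2]
        exact hyv this
      rw [hsplit, Finset.sum_union hdisj] at heq
      have hGzero : ∑ t ∈ Gy, lam t * (sg σ₀ B (t:ℕ) v * sg σ₀ B (t:ℕ) y) = 0 := by
        apply Finset.sum_eq_zero
        intro t ht
        rw [hGydef, Finset.mem_filter] at ht
        rw [hyzero t ht.1 ht.2, zero_mul]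
      rw [hGzero, add_zero] at heq
      -- rewrite the Tv-sum as a sum over Fin m
      have hsum1 : ∑ t ∈ Tv, lam t * (sg σ₀ B (t:ℕ) v * sg σ₀ B (t:ℕ) y)
          = ∑ j : Fin m, lam ((e j : {x // x ∈ Tv}) : Fin B.length)
              * (sg σ₀ B (((e j : {x // x ∈ Tv}) : Fin B.length) : ℕ) v
                * sg σ₀ B (((e j : {x // x ∈ Tv}) : Fin B.length) : ℕ) y) := by
        rw [← Finset.sum_coe_sort Tv]
        exact (Equiv.sum_comp e.toEquiv (fun x : {x // x ∈ Tv} =>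
          lam (x : Fin B.length) * (sg σ₀ B ((x : Fin B.length):ℕ) v
            * sg σ₀ B ((x : Fin B.length):ℕ) y))).symm
      rw [hsum1] at heq
      have hterm : ∀ j : Fin m, lam ((e j : {x // x ∈ Tv}) : Fin B.length)
              * (sg σ₀ B (((e j : {x // x ∈ Tv}) : Fin B.length) : ℕ) v
                * sg σ₀ B (((e j : {x // x ∈ Tv}) : Fin B.length) : ℕ) y)
          = (μ (j:ℕ) * (if (j:ℕ) ≤ (i:ℕ) then 1 else -1)) * σ₀ y := by
        intro j
        rw [hsgy j, hμ]
        simp only [j.2, dif_pos, Fin.eta]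
        ring
      rw [Finset.sum_congr rfl (fun j _ => hterm j)] at heq
      rw [← Finset.sum_mul] at heq
      rcases mul_eq_zero.mp heq with h | h
      · rw [← h]
        rw [← Fin.sum_univ_eq_sum_range (fun j => μ j * (if j ≤ (i:ℕ) then 1 else -1)) m]
      · exact absurd h (spin_ne hσ y)
    -- solve the system
    have hall : ∀ j < m, μ j = 0 := by
      apply sign_system
      intro i hi
      exact hEq ⟨i, hi⟩
    intro t ht
    set j := e.symm ⟨t, ht⟩ with hj
    have hjj : ((e j : {x // x ∈ Tv}) : Fin B.length) = t := by
      rw [hj, OrderIso.apply_symm_apply]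
    have := hall (j:ℕ) j.2
    rw [hμ] at this
    simp only [j.2, dif_pos, Fin.eta] at this
    rw [hjj] at this
    rcases mul_eq_zero.mp this with h | h
    · exact h
    · exact absurd h (sg_ne hσ (t:ℕ) v)
  -- Step 3 : combine
  intro t ht
  by_cases hc : B.count (B.get t) = 1
  · exact hsz t ht hc
  · have h2 : 2 ≤ B.count (B.get t) := by
      have := get_count_pos t; omega
    exact hrz (B.get t) h2 t (by rw [Finset.mem_filter]; exact ⟨ht, rfl⟩)


lemma partA {β : ℝ} (hβ : 0 < β) (hσ : isSpin σ₀)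
    (w₀ : Fin n) (hw₀ : B.count w₀ = 0) (hcrit : Critical β B) :
    (sDist B : ℝ) + β / (1 + β) * (sSing B : ℝ) ≤ ((moveMatrix σ₀ B).rank : ℝ) := by
  classical
  have hKArank : ((KA B).card : ℝ) ≤ ((moveMatrix σ₀ B).rank : ℝ) := by
    have h1 := card_le_rank (B := B) (moveMatrix σ₀ B) (KA B)
      (indep_criterion (B := B) (moveMatrix σ₀ B) (KA B) (indepA hσ w₀ hw₀))
    exact_mod_cast h1
  have h1β : (0:ℝ) < 1 + β := by linarith
  by_cases hs1 : sSing B = 0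
  · rw [hs1]
    simp only [Nat.cast_zero, mul_zero, add_zero]
    have h2 := sDist_le_KA_card (B := B)
    calc (sDist B : ℝ) ≤ ((KA B).card : ℝ) := by exact_mod_cast h2
      _ ≤ _ := hKArank
  · have hQSne : (QS B).Nonempty := by
      rw [← Finset.card_pos, QS_card]
      omega
    have hcm := count_main (B := B) hβ hcrit.2.2 hQSne B.length 0 (by omega) (by omega)
      (Or.inl rfl)
    have hf1 : (QS B).filter (fun q : Fin B.length => 0 ≤ (q:ℕ)) = QS B := by
      apply Finset.filter_true_of_mem
      intro _ _
      omega
    have hf2 : ((KA B) \ (QS B)).filter (fun t : Fin B.length => 0 ≤ (t:ℕ))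
        = (KA B) \ (QS B) := by
      apply Finset.filter_true_of_mem
      intro _ _
      omega
    rw [hf1, hf2, Nat.sub_zero] at hcm
    have hcards := Finset.card_le_card (QS_subset_KA B)
    have hsd : (((KA B) \ (QS B)).card : ℝ) = ((KA B).card : ℝ) - ((QS B).card : ℝ) := by
      rw [Finset.card_sdiff_of_subset (QS_subset_KA B), Nat.cast_sub hcards]
    rw [hsd, QS_card] at hcm
    have hℓ := hcrit.2.1
    rw [← mul_le_mul_iff_right₀ h1β]
    have hgoal : (1+β) * ((sDist B : ℝ) + β/(1+β) * (sSing B : ℝ))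
        = (1+β) * (sDist B : ℝ) + β * (sSing B : ℝ) := by
      field_simp
    rw [hgoal]
    have hmul := mul_le_mul_of_nonneg_left hKArank (le_of_lt h1β)
    linarith

end Indep
end PartA
end Stmt8Aux


open Function

section CycleBreak
variable {α : Type*} [Fintype α] [LinearOrder α]

/-- break each cycle of a functional graph by removing one vertex per cycle -/
lemma cycle_break (R : Finset α) (f : α → α)
    (hf1 : ∀ v ∈ R, f v ≠ v) (hfix : ∀ v, v ∉ R → f v = v) :
    ∃ C : Finset α, C ⊆ R ∧ 2 * C.card ≤ R.card ∧
      ∀ v : α, ∃ k : ℕ, f^[k] v ∉ R \ C := by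
  classical
  set N := Fintype.card α with hN
  set Cyc : Finset α := R.filter (fun v => ∃ k ∈ Finset.Icc 1 N, f^[k] v = v) with hCyc
  set orb : α → Finset α := fun v => (Finset.range N).image (fun k => f^[k] v) with horb
  have hmemCyc : ∀ x : α, x ∈ Cyc ↔ (x ∈ R ∧ ∃ k, (1 ≤ k ∧ k ≤ N) ∧ f^[k] x = x) := by
    intro x
    rw [hCyc]
    simp only [Finset.mem_filter, Finset.mem_Icc]
  -- iterates of a point outside R are fixed
  have hstick : ∀ x, x ∉ R → ∀ i, f^[i] x = x := by
    intro x hx i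
    induction i with
    | zero => rfl
    | succ i ih => rw [Function.iterate_succ_apply', ih, hfix x hx]
  -- iterates of a cyclic point remain in R
  have hstay : ∀ v ∈ Cyc, ∀ j, f^[j] v ∈ R := by
    intro v hv j
    rw [hmemCyc] at hv
    obtain ⟨hvR, p, hp, hpv⟩ := hv
    by_contra hout
    rcases Nat.eq_zero_or_pos j with rfl | hj
    · exact hout hvR
    have h1 : f^[p * j] v = v := by
      rw [Function.iterate_mul]
      exact Function.iterate_fixed hpv j
    have h2 : p * j = (p * j - j) + j := by
      have : j ≤ p * j := Nat.le_mul_of_pos_left j (by omega)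
      omega
    have h3 : f^[p * j] v = f^[j] v := by
      rw [h2, Function.iterate_add_apply, hstick _ hout]
    rw [h1] at h3
    rw [← h3] at hout
    exact hout hvR
  -- membership in the orbit of a cyclic point
  have hmod : ∀ v ∈ Cyc, ∀ m, ∃ r < N, f^[r] v = f^[m] v := by
    intro v hv m
    rw [hmemCyc] at hv
    obtain ⟨hvR, p, hp, hpv⟩ := hv
    have hmp := Nat.mod_lt m (show 0 < p by omega)
    refine ⟨m % p, by omega, ?_⟩
    conv_rhs => rw [← Nat.mod_add_div m p]
    rw [Function.iterate_add_apply, Function.iterate_mul,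
      Function.iterate_fixed hpv (m / p)]
  have horbmem : ∀ v ∈ Cyc, ∀ x, x ∈ orb v ↔ ∃ m, f^[m] v = x := by
    intro v hv x
    rw [horb]
    simp only [Finset.mem_image, Finset.mem_range]
    constructor
    · rintro ⟨k, _, hk⟩; exact ⟨k, hk⟩
    · rintro ⟨m, hm⟩
      obtain ⟨r, hr, hrm⟩ := hmod v hv m
      exact ⟨r, hr, by rw [hrm, hm]⟩
  -- cyclic points are closed under f
  have hfc : ∀ v ∈ Cyc, f v ∈ Cyc := by
    intro v hv
    have hv' := hv
    rw [hmemCyc] at hv' ⊢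
    obtain ⟨hvR, p, hp, hpv⟩ := hv'
    refine ⟨hstay v hv 1, p, hp, ?_⟩
    have : f^[p] (f v) = f (f^[p] v) := by
      rw [← Function.iterate_succ_apply, Function.iterate_succ_apply']
    rw [this, hpv]
  -- orbits are invariant under f
  have horbf : ∀ v ∈ Cyc, orb (f v) = orb v := by
    intro v hv
    apply Finset.Subset.antisymm
    · intro x hx
      rw [horbmem _ (hfc v hv)] at hx
      obtain ⟨m, hm⟩ := hx
      rw [horbmem _ hv]
      exact ⟨m + 1, by rw [Function.iterate_succ_apply]; exact hm⟩
    · intro x hx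
      rw [horbmem _ hv] at hx
      obtain ⟨m, hm⟩ := hx
      rw [horbmem _ (hfc v hv)]
      rw [hmemCyc] at hv
      obtain ⟨hvR, p, hp, hpv⟩ := hv
      refine ⟨m + p - 1, ?_⟩
      have h2 : f^[m + p] v = x := by
        rw [Function.iterate_add_apply, hpv, hm]
      have h3 : f^[m + p - 1] (f v) = f^[m + p] v := by
        rw [← Function.iterate_succ_apply]
        congr 1
        omega
      rw [h3, h2]
  -- iterates of a cyclic point are cyclic
  have hitc : ∀ v ∈ Cyc, ∀ r, f^[r] v ∈ Cyc := by
    intro v hv r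
    have hv' := hv
    rw [hmemCyc] at hv' ⊢
    obtain ⟨hvR, p, hp, hpv⟩ := hv'
    refine ⟨hstay v hv r, p, hp, ?_⟩
    have : f^[p] (f^[r] v) = f^[r] (f^[p] v) := by
      rw [← Function.iterate_add_apply, Nat.add_comm, Function.iterate_add_apply]
    rw [this, hpv]
  have horbit : ∀ v ∈ Cyc, ∀ r, orb (f^[r] v) = orb v := by
    intro v hv r
    induction r with
    | zero => rfl
    | succ r ih =>
      rw [Function.iterate_succ_apply', horbf _ (hitc v hv r), ih]
  set C : Finset α := Cyc.filter (fun v => ∀ w ∈ orb v, v ≤ w) with hC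
  have hmemC : ∀ x : α, x ∈ C ↔ x ∈ Cyc ∧ ∀ w ∈ orb x, x ≤ w := by
    intro x
    rw [hC]
    simp only [Finset.mem_filter]
  have hCsub : C ⊆ R := by
    intro v hv
    rw [hmemC] at hv
    have h1 := hv.1
    rw [hmemCyc] at h1
    exact h1.1
  have hself : ∀ v : α, v ∈ orb v := by
    intro v
    rw [horb]
    simp only [Finset.mem_image, Finset.mem_range]
    refine ⟨0, ?_, rfl⟩
    rw [hN]
    exact Fintype.card_pos_iff.mpr ⟨v⟩
  -- the orbit minimum of a cyclic point lies in C
  have hminC : ∀ v ∈ Cyc, ∃ m ∈ C, m ∈ orb v := by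
    intro v hv
    have hone : (orb v).Nonempty := ⟨v, hself v⟩
    set m := (orb v).min' hone with hm
    have hmm := Finset.min'_mem _ hone
    rw [horbmem _ hv] at hmm
    obtain ⟨r, hr⟩ := hmm
    rw [← hm] at hr
    have hmc : m ∈ Cyc := by rw [← hr]; exact hitc v hv r
    have horbm : orb m = orb v := by rw [← hr]; exact horbit v hv r
    refine ⟨m, ?_, ?_⟩
    · rw [hmemC]
      refine ⟨hmc, ?_⟩
      intro w hw
      rw [horbm] at hw
      exact Finset.min'_le _ _ hw
    · rw [← horbm]; exact hself m
  refine ⟨C, hCsub, ?_, ?_⟩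
  · -- 2|C| ≤ |R| : v ↦ f v is injective on C with image in R \ C
    have hmapsC : ∀ v ∈ C, f v ∈ R \ C := by
      intro v hv
      rw [hmemC] at hv
      obtain ⟨hvc, hvmin⟩ := hv
      rw [Finset.mem_sdiff]
      constructor
      · exact hstay v hvc 1
      · intro hfvC
        rw [hmemC] at hfvC
        obtain ⟨hfvc, hfvmin⟩ := hfvC
        have h1 : v ≤ f v := by
          apply hvmin
          rw [horbmem _ hvc]
          exact ⟨1, rfl⟩
        have h2 : f v ≤ v := by
          apply hfvmin
          rw [horbmem _ (hfc v hvc)]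
          have hvc' := hvc
          rw [hmemCyc] at hvc'
          obtain ⟨hvR, p, hp, hpv⟩ := hvc'
          refine ⟨p - 1, ?_⟩
          have h4 : f^[p - 1] (f v) = f^[p] v := by
            rw [← Function.iterate_succ_apply]
            congr 1
            omega
          rw [h4, hpv]
        have h3 : f v = v := le_antisymm h2 h1
        exact hf1 v (hCsub (by rw [hmemC]; exact ⟨hvc, hvmin⟩)) h3
    have hinj : Set.InjOn f C := by
      intro v1 h1 v2 h2 hf
      rw [Finset.mem_coe, hmemC] at h1 h2
      obtain ⟨h1c, h1min⟩ := h1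
      obtain ⟨h2c, h2min⟩ := h2
      have ho : orb v1 = orb v2 := by
        rw [← horbf _ h1c, ← horbf _ h2c, hf]
      have ha : v1 ≤ v2 := h1min v2 (by rw [ho]; exact hself v2)
      have hb : v2 ≤ v1 := h2min v1 (by rw [← ho]; exact hself v1)
      exact le_antisymm ha hb
    have hdisj : Disjoint C (C.image f) := by
      rw [Finset.disjoint_right]
      intro x hx
      rw [Finset.mem_image] at hx
      obtain ⟨v, hv, rfl⟩ := hx
      have := hmapsC v hv
      rw [Finset.mem_sdiff] at this
      exact this.2
    have hsub2 : C ∪ C.image f ⊆ R := by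
      intro x hx
      rw [Finset.mem_union] at hx
      rcases hx with hx | hx
      · exact hCsub hx
      · rw [Finset.mem_image] at hx
        obtain ⟨v, hv, rfl⟩ := hx
        have := hmapsC v hv
        rw [Finset.mem_sdiff] at this
        exact this.1
    have := Finset.card_le_card hsub2
    rw [Finset.card_union_of_disjoint hdisj, Finset.card_image_of_injOn hinj] at this
    omega
  · -- exit condition
    intro v
    by_contra hcon
    push_neg at hcon
    have hN1 : ∀ k, f^[k] v ∈ R \ C := hcon
    have hpig : ∃ i j, i < j ∧ j ≤ N ∧ f^[i] v = f^[j] v := by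
      by_contra hpig
      push_neg at hpig
      have hinj2 : Set.InjOn (fun k => f^[k] v) (Finset.range (N+1) : Finset ℕ) := by
        intro i hi j hj hij
        rw [Finset.coe_range, Set.mem_Iio] at hi hj
        by_contra hne
        rcases lt_or_gt_of_ne hne with h | h
        · exact hpig i j h (by omega) hij
        · exact hpig j i h (by omega) hij.symm
      have := Finset.card_le_card_of_injOn (fun k => f^[k] v)
        (fun k _ => Finset.mem_univ _) hinj2
      rw [Finset.card_range, Finset.card_univ, ← hN] at this
      omega
    obtain ⟨i, j, hij, hjN, hfij⟩ := hpig
    set w := f^[i] v with hw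
    have hwR : w ∈ R := by
      have := hN1 i
      rw [Finset.mem_sdiff] at this
      exact this.1
    have hwc : w ∈ Cyc := by
      rw [hmemCyc]
      refine ⟨hwR, j - i, by omega, ?_⟩
      rw [hw, ← Function.iterate_add_apply]
      have : j - i + i = j := by omega
      rw [this, ← hfij]
    obtain ⟨m, hmC, hmorb⟩ := hminC w hwc
    rw [horbmem _ hwc] at hmorb
    obtain ⟨r, hr⟩ := hmorb
    have : m = f^[r + i] v := by
      rw [Function.iterate_add_apply, ← hw, hr]
    have hmS := hN1 (r + i)
    rw [← this, Finset.mem_sdiff] at hmS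
    exact hmS.2 hmC

end CycleBreak

namespace Stmt8Aux
open Matrix Submodule Module
variable {n : ℕ} {σ₀ : Fin n → ℝ} {B : List (Fin n)}

lemma neg_one_pow_odd_sub {a b : ℕ} (hab : a ≤ b) (h : Odd (b - a)) :
    ((-1:ℝ))^b = -((-1:ℝ))^a := by
  have hb : b = a + (b - a) := by omega
  rw [hb, pow_add, Odd.neg_one_pow h]
  ring

lemma partB (hσ : isSpin σ₀) (w₀ : Fin n) (hw₀ : B.count w₀ = 0)
    (hnr : noRevisit B) (hBne : B ≠ []) :
    (sDist B : ℝ) + (sRep B : ℝ)/2 ≤ ((moveMatrix σ₀ B).rank : ℝ) := by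
  classical
  have hlen0 : 0 < B.length := List.length_pos_iff.mpr hBne
  have hne0 : Nonempty (Fin B.length) := ⟨⟨0, hlen0⟩⟩
  set R : Finset (Fin n) := B.toFinset.filter (fun v => 2 ≤ B.count v) with hR
  have hmemR : ∀ v : Fin n, v ∈ R ↔ v ∈ B.toFinset ∧ 2 ≤ B.count v := by
    intro v; rw [hR]; simp only [Finset.mem_filter]
  have hRsub : R ⊆ B.toFinset := by
    intro v hv; exact ((hmemR v).mp hv).1
  -- occurrence data for each letter
  have hdata : ∀ v : Fin n, v ∈ B.toFinset → ∃ (av bv : Fin B.length) (uv : Fin n),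
      (B.get av = v ∧ cnt B v (av:ℕ) = 0) ∧
      (2 ≤ B.count v → B.get bv = v ∧ (av:ℕ) < (bv:ℕ) ∧ cnt B v (bv:ℕ) = 1 ∧
        uv ≠ v ∧ uv ∈ B.toFinset ∧ Odd (cnt B uv (bv:ℕ) - cnt B uv (av:ℕ))) := by
    intro v hv
    have hc1 : 0 < B.count v := List.count_pos_iff.mpr (List.mem_toFinset.mp hv)
    have hcnay : cnt B v 0 < cnt B v B.length := by
      rw [cnt_len B v (le_refl _)]
      simpa [cnt] using hc1
    have hO1 : (Finset.univ.filter (fun t : Fin B.length => B.get t = v)).Nonempty := by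
      obtain ⟨t0, _, _, ht3⟩ := exists_occ B v hcnay
      exact ⟨t0, by rw [Finset.mem_filter]; exact ⟨Finset.mem_univ _, ht3⟩⟩
    set av := Finset.min' _ hO1 with havdef
    have havmem := Finset.min'_mem _ hO1
    rw [Finset.mem_filter] at havmem
    have hgetav : B.get av = v := havmem.2
    have hcnt0 : cnt B v (av:ℕ) = 0 := by
      by_contra hc
      have hz : cnt B v 0 = 0 := by simp [cnt]
      have hlt : cnt B v 0 < cnt B v (av:ℕ) := by omega
      obtain ⟨r, -, hr2, hr3⟩ := exists_occ B v hlt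
      have hle : av ≤ r := Finset.min'_le _ _ (by
        rw [Finset.mem_filter]; exact ⟨Finset.mem_univ _, hr3⟩)
      have hle' : (av:ℕ) ≤ (r:ℕ) := hle
      omega
    by_cases h2 : 2 ≤ B.count v
    · -- second occurrence
      have hcav1 : cnt B v ((av:ℕ)+1) = 1 := by
        rw [cnt_succ B v av av.2]
        simp only [Fin.eta, hgetav, if_pos]
        omega
      have hclen : cnt B v B.length = B.count v := cnt_len B v (le_refl _)
      have hO2 : (Finset.univ.filter (fun t : Fin B.length =>
          (av:ℕ) < (t:ℕ) ∧ B.get t = v)).Nonempty := by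
        obtain ⟨t, ht1, -, ht3⟩ := exists_occ B v (show cnt B v ((av:ℕ)+1) < cnt B v B.length by omega)
        exact ⟨t, by rw [Finset.mem_filter]; exact ⟨Finset.mem_univ _, by omega, ht3⟩⟩
      set bv := Finset.min' _ hO2 with hbvdef
      have hbvmem := Finset.min'_mem _ hO2
      rw [Finset.mem_filter] at hbvmem
      have havbv : (av:ℕ) < (bv:ℕ) := hbvmem.2.1
      have hgetbv : B.get bv = v := hbvmem.2.2
      have hcnt1 : cnt B v (bv:ℕ) = 1 := by
        have hge : 1 ≤ cnt B v (bv:ℕ) := by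
          have := cnt_mono B v (show (av:ℕ)+1 ≤ (bv:ℕ) by omega)
          omega
        by_contra hc
        have h2c : cnt B v ((av:ℕ)+1) < cnt B v (bv:ℕ) := by omega
        obtain ⟨r, hr1, hr2, hr3⟩ := exists_occ B v h2c
        have : bv ≤ r := Finset.min'_le _ _ (by
          rw [Finset.mem_filter]
          exact ⟨Finset.mem_univ _, by omega, hr3⟩)
        have : (bv:ℕ) ≤ (r:ℕ) := this
        omega
      -- do not revisit: a flipped vertex other than v
      obtain ⟨u, hu⟩ := hnr (av:ℕ) ((bv:ℕ)+1) (by omega) (by exact bv.2)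
      have hsv : (seg B (av:ℕ) ((bv:ℕ)+1)).count v + cnt B v (av:ℕ)
          = cnt B v ((bv:ℕ)+1) := cnt_seg _ _ (by omega)
      have hcbv1 : cnt B v ((bv:ℕ)+1) = 2 := by
        rw [cnt_succ B v bv bv.2]
        simp only [Fin.eta, hgetbv, if_pos]
        omega
      have hunev : u ≠ v := by
        intro hc
        apply hu
        rw [hc]
        have h22 : (seg B (av:ℕ) ((bv:ℕ)+1)).count v = 2 := by omega
        rw [h22]
        exact even_two
      have husege : (seg B (av:ℕ) ((bv:ℕ)+1)).count u = (seg B (av:ℕ) (bv:ℕ)).count u := by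
        have e1 : (seg B (av:ℕ) ((bv:ℕ)+1)).count u + cnt B u (av:ℕ)
            = cnt B u ((bv:ℕ)+1) := cnt_seg _ _ (by omega)
        have e2 : (seg B (av:ℕ) (bv:ℕ)).count u + cnt B u (av:ℕ)
            = cnt B u (bv:ℕ) := cnt_seg _ _ (by omega)
        have e3 : cnt B u ((bv:ℕ)+1) = cnt B u (bv:ℕ) := by
          rw [cnt_succ B u bv bv.2]
          simp only [Fin.eta, hgetbv]
          rw [if_neg (fun hc => hunev hc.symm)]
          omega
        omega
      have hsegodd : Odd ((seg B (av:ℕ) (bv:ℕ)).count u) := by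
        rw [← husege]
        exact Nat.not_even_iff_odd.mp hu
      have hodd : Odd (cnt B u (bv:ℕ) - cnt B u (av:ℕ)) := by
        have e2 : (seg B (av:ℕ) (bv:ℕ)).count u + cnt B u (av:ℕ)
            = cnt B u (bv:ℕ) := cnt_seg _ _ (by omega)
        have : cnt B u (bv:ℕ) - cnt B u (av:ℕ) = (seg B (av:ℕ) (bv:ℕ)).count u := by omega
        rw [this]
        exact hsegodd
      have humem : u ∈ B.toFinset := by
        rw [List.mem_toFinset, ← List.count_pos_iff]
        obtain ⟨c, hc⟩ := hsegodd
        have e2 : (seg B (av:ℕ) (bv:ℕ)).count u + cnt B u (av:ℕ)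
            = cnt B u (bv:ℕ) := cnt_seg _ _ (by omega)
        have := cnt_le_count B u (bv:ℕ)
        omega
      exact ⟨av, bv, u, ⟨hgetav, hcnt0⟩,
        fun _ => ⟨hgetbv, havbv, hcnt1, hunev, humem, hodd⟩⟩
    · exact ⟨av, av, v, ⟨hgetav, hcnt0⟩, fun hcon => absurd hcon h2⟩
  choose! fa fb fu hdat using hdata
  have hfaget : ∀ v ∈ B.toFinset, B.get (fa v) = v := fun v hv => ((hdat v hv).1).1
  have hfacnt : ∀ v ∈ B.toFinset, cnt B v ((fa v):ℕ) = 0 := fun v hv => ((hdat v hv).1).2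
  have hrep : ∀ v ∈ R, B.get (fb v) = v ∧ ((fa v):ℕ) < ((fb v):ℕ)
      ∧ cnt B v ((fb v):ℕ) = 1 ∧ fu v ≠ v ∧ fu v ∈ B.toFinset
      ∧ Odd (cnt B (fu v) ((fb v):ℕ) - cnt B (fu v) ((fa v):ℕ)) := by
    intro v hv
    exact (hdat v (hRsub hv)).2 ((hmemR v).mp hv).2
  set f : Fin n → Fin n := fun v => if v ∈ R then fu v else v with hf
  have hf1 : ∀ v ∈ R, f v ≠ v := by
    intro v hv
    show (if v ∈ R then fu v else v) ≠ v
    rw [if_pos hv]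
    exact (hrep v hv).2.2.2.1
  have hfixf : ∀ v, v ∉ R → f v = v := by
    intro v hv
    show (if v ∈ R then fu v else v) = v
    exact if_neg hv
  obtain ⟨C, hCsub, hCcard, hexit⟩ := cycle_break R f hf1 hfixf
  set S := R \ C with hS
  have hSsubR : S ⊆ R := Finset.sdiff_subset
  have hexS : ∀ v : Fin n, ∃ k, f^[k] v ∉ S := by
    intro v
    obtain ⟨k, hk⟩ := hexit v
    refine ⟨k, fun hc => hk ?_⟩
    rw [hS] at hc
    simp only [Finset.mem_sdiff] at hc ⊢
    exact Finset.mem_sdiff.mpr hc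
  set D : Fin n → ℕ := fun v => Nat.find (hexS v) with hD
  have hDpos : ∀ v ∈ S, 1 ≤ D v := by
    intro v hv
    by_contra hc
    push_neg at hc
    have h0 : D v = 0 := by omega
    have hsp : f^[D v] v ∉ S := Nat.find_spec (hexS v)
    rw [h0] at hsp
    exact hsp hv
  have hDstep : ∀ v ∈ S, f v ∈ S → D (f v) < D v := by
    intro v hv hfv
    have h1 : f^[D v] v ∉ S := Nat.find_spec (hexS v)
    have h3 : f^[D v - 1] (f v) = f^[D v] v := by
      rw [← Function.iterate_succ_apply]
      congr 1
      have := hDpos v hv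
      omega
    have h4 : Nat.find (hexS (f v)) ≤ D v - 1 :=
      Nat.find_min' _ (by rw [h3]; exact h1)
    have h5 : D (f v) ≤ D v - 1 := h4
    have h6 := hDpos v hv
    omega
  -- the chosen columns
  set KB : Finset (Fin B.length) := (B.toFinset.image fa) ∪ (S.image fb) with hKB
  have hKBmem : ∀ t ∈ KB, (∃ v ∈ B.toFinset, t = fa v) ∨ (∃ v ∈ S, t = fb v) := by
    intro t ht
    rw [hKB, Finset.mem_union, Finset.mem_image, Finset.mem_image] at ht
    rcases ht with ⟨v, hv, rfl⟩ | ⟨v, hv, rfl⟩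
    · exact Or.inl ⟨v, hv, rfl⟩
    · exact Or.inr ⟨v, hv, rfl⟩
  have hSsubB : S ⊆ B.toFinset := fun v hv => hRsub (hSsubR hv)
  have hfbget : ∀ v ∈ S, B.get (fb v) = v := fun v hv => (hrep v (hSsubR hv)).1
  have hfbcnt : ∀ v ∈ S, cnt B v ((fb v):ℕ) = 1 := fun v hv => (hrep v (hSsubR hv)).2.2.1
  have hfanefb : ∀ v ∈ B.toFinset, ∀ w ∈ S, fa v ≠ fb w := by
    intro v hv w hw heq
    have h1 : v = w := by
      rw [← hfaget v hv, ← hfbget w hw, heq]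
    subst h1
    have := hfacnt v hv
    have := hfbcnt v hw
    rw [heq] at *
    omega
  have hclass : ∀ t ∈ KB, ∀ x : Fin n, B.get t = x →
      x ∈ B.toFinset ∧ (t = fa x ∨ (x ∈ S ∧ t = fb x)) := by
    intro t ht x hx
    rcases hKBmem t ht with ⟨v, hv, rfl⟩ | ⟨v, hv, rfl⟩
    · have : v = x := by rw [← hfaget v hv, hx]
      subst this
      exact ⟨hv, Or.inl rfl⟩
    · have : v = x := by rw [← hfbget v hv, hx]
      subst this
      exact ⟨hSsubB hv, Or.inr ⟨hv, rfl⟩⟩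
  have hfaKB : ∀ v ∈ B.toFinset, fa v ∈ KB := by
    intro v hv
    rw [hKB, Finset.mem_union, Finset.mem_image]
    exact Or.inl ⟨v, hv, rfl⟩
  have hfbKB : ∀ v ∈ S, fb v ∈ KB := by
    intro v hv
    rw [hKB, Finset.mem_union]
    right
    rw [Finset.mem_image]
    exact ⟨v, hv, rfl⟩
  have hw0ne : ∀ x ∈ B.toFinset, x ≠ w₀ := by
    intro x hx hc
    have := List.count_pos_iff.mpr (List.mem_toFinset.mp hx)
    rw [hc, hw₀] at this
    omega
  -- independence
  have hindep : ∀ lam : Fin B.length → ℝ,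
      (∀ e, ∑ t ∈ KB, lam t * moveMatrix σ₀ B e t = 0) → ∀ t ∈ KB, lam t = 0 := by
    intro lam hcomb
    have hU : ∀ x ∈ B.toFinset, x ∉ S → lam (fa x) = 0 := by
      intro x hx hxS
      have heq := row_eval KB lam hcomb x w₀ (hw0ne x hx)
      have hfil : KB.filter (fun t : Fin B.length => B.get t = x ∨ B.get t = w₀)
          = {fa x} := by
        ext t
        rw [Finset.mem_filter, Finset.mem_singleton]
        constructor
        · rintro ⟨htKB, h1 | h1⟩
          · rcases (hclass t htKB x h1).2 with h | h
            · exact h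
            · exact absurd h.1 hxS
          · exfalso
            exact hw0ne (B.get t) (List.mem_toFinset.mpr (B.get_mem t)) h1
        · rintro rfl
          exact ⟨hfaKB x hx, Or.inl (hfaget x hx)⟩
      rw [hfil, Finset.sum_singleton] at heq
      have h2 : sg σ₀ B ((fa x):ℕ) x * sg σ₀ B ((fa x):ℕ) w₀ ≠ 0 :=
        mul_ne_zero (sg_ne hσ _ _) (sg_ne hσ _ _)
      rcases mul_eq_zero.mp heq with h | h
      · exact h
      · exact absurd h h2
    have hpair : ∀ d : ℕ, ∀ v ∈ S, D v = d → lam (fa v) = 0 ∧ lam (fb v) = 0 := by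
      intro d
      induction d using Nat.strong_induction_on with
      | _ d ih =>
      intro v hvS hDv
      have hvR : v ∈ R := hSsubR hvS
      have hvB : v ∈ B.toFinset := hRsub hvR
      obtain ⟨hgb, hab, hcb1, hune, humem, hodd⟩ := hrep v hvR
      have hvu : v ≠ fu v := Ne.symm hune
      have hfanb : fa v ≠ fb v := hfanefb v hvB v hvS
      -- equation 1 : row (v, w₀)
      have heq1 := row_eval KB lam hcomb v w₀ (hw0ne v hvB)
      have hfil1 : KB.filter (fun t : Fin B.length => B.get t = v ∨ B.get t = w₀)
          = {fa v, fb v} := by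
        ext t
        simp only [Finset.mem_filter, Finset.mem_insert, Finset.mem_singleton]
        constructor
        · rintro ⟨htKB, h1 | h1⟩
          · rcases (hclass t htKB v h1).2 with h | h
            · exact Or.inl h
            · exact Or.inr h.2
          · exfalso
            exact hw0ne (B.get t) (List.mem_toFinset.mpr (B.get_mem t)) h1
        · rintro (rfl | rfl)
          · exact ⟨hfaKB v hvB, Or.inl (hfaget v hvB)⟩
          · exact ⟨hfbKB v hvS, Or.inl hgb⟩
      rw [hfil1, Finset.sum_pair hfanb] at heq1
      -- equation 2 : row (v, fu v)
      have heq2 := row_eval KB lam hcomb v (fu v) hvu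
      have hfil2 : KB.filter (fun t : Fin B.length => B.get t = v ∨ B.get t = fu v)
          = {fa v, fb v} ∪ KB.filter (fun t : Fin B.length => B.get t = fu v) := by
        ext t
        simp only [Finset.mem_filter, Finset.mem_union, Finset.mem_insert,
          Finset.mem_singleton]
        constructor
        · rintro ⟨htKB, h1 | h1⟩
          · rcases (hclass t htKB v h1).2 with h | h
            · exact Or.inl (Or.inl h)
            · exact Or.inl (Or.inr h.2)
          · exact Or.inr ⟨htKB, h1⟩
        · rintro ((rfl | rfl) | ⟨h1, h2⟩)
          · exact ⟨hfaKB v hvB, Or.inl (hfaget v hvB)⟩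
          · exact ⟨hfbKB v hvS, Or.inl hgb⟩
          · exact ⟨h1, Or.inr h2⟩
      have hdisj2 : Disjoint ({fa v, fb v} : Finset (Fin B.length))
          (KB.filter (fun t : Fin B.length => B.get t = fu v)) := by
        rw [Finset.disjoint_left]
        intro t ht1 ht2
        simp only [Finset.mem_insert, Finset.mem_singleton] at ht1
        rw [Finset.mem_filter] at ht2
        rcases ht1 with rfl | rfl
        · rw [hfaget v hvB] at ht2
          exact hune ht2.2.symm
        · rw [hgb] at ht2
          exact hune ht2.2.symm
      rw [hfil2, Finset.sum_union hdisj2, Finset.sum_pair hfanb] at heq2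
      have hzero2 : ∑ t ∈ KB.filter (fun t : Fin B.length => B.get t = fu v),
          lam t * (sg σ₀ B (t:ℕ) v * sg σ₀ B (t:ℕ) (fu v)) = 0 := by
        apply Finset.sum_eq_zero
        intro t ht
        rw [Finset.mem_filter] at ht
        have hcl := hclass t ht.1 (fu v) ht.2
        have hlam : lam t = 0 := by
          rcases hcl.2 with rfl | ⟨huS, rfl⟩
          · by_cases huS : fu v ∈ S
            · have hfveq : f v = fu v := by
                show (if v ∈ R then fu v else v) = fu v
                exact if_pos hvR
              have hDlt : D (fu v) < d := by
                rw [← hDv, ← hfveq]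
                exact hDstep v hvS (by rw [hfveq]; exact huS)
              exact (ih (D (fu v)) hDlt (fu v) huS rfl).1
            · exact hU (fu v) hcl.1 huS
          · have hfveq : f v = fu v := by
              show (if v ∈ R then fu v else v) = fu v
              exact if_pos hvR
            have hDlt : D (fu v) < d := by
              rw [← hDv, ← hfveq]
              exact hDstep v hvS (by rw [hfveq]; exact huS)
            exact (ih (D (fu v)) hDlt (fu v) huS rfl).2
        rw [hlam, zero_mul]
      rw [hzero2, add_zero] at heq2
      -- solve the 2x2 system
      have hcntw0a : cnt B w₀ ((fa v):ℕ) = 0 := by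
        have := cnt_le_count B w₀ ((fa v):ℕ)
        omega
      have hcntw0b : cnt B w₀ ((fb v):ℕ) = 0 := by
        have := cnt_le_count B w₀ ((fb v):ℕ)
        omega
      have hwa : sg σ₀ B ((fa v):ℕ) w₀ = σ₀ w₀ := by
        rw [sg_apply, hcntw0a, pow_zero, one_mul]
      have hwb : sg σ₀ B ((fb v):ℕ) w₀ = σ₀ w₀ := by
        rw [sg_apply, hcntw0b, pow_zero, one_mul]
      have hub : sg σ₀ B ((fb v):ℕ) (fu v) = - sg σ₀ B ((fa v):ℕ) (fu v) := by
        rw [sg_apply, sg_apply]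
        have hmono := cnt_mono B (fu v) (le_of_lt hab)
        rw [neg_one_pow_odd_sub hmono hodd]
        ring
      have hdet : (sg σ₀ B ((fa v):ℕ) v * sg σ₀ B ((fa v):ℕ) w₀)
            * (sg σ₀ B ((fb v):ℕ) v * sg σ₀ B ((fb v):ℕ) (fu v))
          - (sg σ₀ B ((fb v):ℕ) v * sg σ₀ B ((fb v):ℕ) w₀)
            * (sg σ₀ B ((fa v):ℕ) v * sg σ₀ B ((fa v):ℕ) (fu v)) ≠ 0 := by
        rw [hwa, hwb, hub]
        have e1 : sg σ₀ B ((fa v):ℕ) v * σ₀ w₀ * (sg σ₀ B ((fb v):ℕ) v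
              * -sg σ₀ B ((fa v):ℕ) (fu v))
            - sg σ₀ B ((fb v):ℕ) v * σ₀ w₀ * (sg σ₀ B ((fa v):ℕ) v
              * sg σ₀ B ((fa v):ℕ) (fu v))
            = (-2) * (sg σ₀ B ((fa v):ℕ) v * sg σ₀ B ((fb v):ℕ) v * σ₀ w₀
              * sg σ₀ B ((fa v):ℕ) (fu v)) := by ring
        rw [e1]
        apply mul_ne_zero (by norm_num)
        apply mul_ne_zero
        apply mul_ne_zero
        apply mul_ne_zero
        · exact sg_ne hσ _ _
        · exact sg_ne hσ _ _
        · exact spin_ne hσ _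
        · exact sg_ne hσ _ _
      exact two_by_two heq1 heq2 hdet
    intro t ht
    rcases hKBmem t ht with ⟨v, hvB, rfl⟩ | ⟨v, hvS, rfl⟩
    · by_cases hvS : v ∈ S
      · exact (hpair (D v) v hvS rfl).1
      · exact hU v hvB hvS
    · exact (hpair (D v) v hvS rfl).2
  -- rank bound
  have hKBrank : ((KB).card : ℝ) ≤ ((moveMatrix σ₀ B).rank : ℝ) := by
    have h1 := card_le_rank (B := B) (moveMatrix σ₀ B) KB
      (indep_criterion (B := B) (moveMatrix σ₀ B) KB hindep)
    exact_mod_cast h1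
  -- cardinality of KB
  have hinj1 : Set.InjOn fa (B.toFinset : Set (Fin n)) := by
    intro v1 h1 v2 h2 heq
    rw [Finset.mem_coe] at h1 h2
    rw [← hfaget v1 h1, ← hfaget v2 h2, heq]
  have hinj2 : Set.InjOn fb (S : Set (Fin n)) := by
    intro v1 h1 v2 h2 heq
    rw [Finset.mem_coe] at h1 h2
    rw [← hfbget v1 h1, ← hfbget v2 h2, heq]
  have hdisjim : Disjoint (B.toFinset.image fa) (S.image fb) := by
    rw [Finset.disjoint_left]
    intro t ht1 ht2
    rw [Finset.mem_image] at ht1 ht2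
    obtain ⟨v, hv, rfl⟩ := ht1
    obtain ⟨w, hw, hww⟩ := ht2
    exact hfanefb v hv w hw hww.symm
  have hKBcard : KB.card = sDist B + S.card := by
    rw [hKB, Finset.card_union_of_disjoint hdisjim,
      Finset.card_image_of_injOn hinj1, Finset.card_image_of_injOn hinj2]
    rfl
  have hScard : S.card = R.card - C.card := by
    rw [hS]
    exact Finset.card_sdiff_of_subset hCsub
  have hRcard : R.card = sRep B := rfl
  have hCR : C.card ≤ R.card := Finset.card_le_card hCsub
  -- final computation
  have hfinal : (sDist B : ℝ) + (sRep B : ℝ)/2 ≤ (KB.card : ℝ) := by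
    rw [hKBcard]
    push_cast
    have h1 : (S.card : ℝ) = (R.card : ℝ) - (C.card : ℝ) := by
      rw [hScard, Nat.cast_sub hCR]
    have h2 : 2 * (C.card : ℝ) ≤ (R.card : ℝ) := by exact_mod_cast hCcard
    have h3 : (R.card : ℝ) = (sRep B : ℝ) := by exact_mod_cast congrArg Nat.cast hRcard
    linarith
  linarith

end Stmt8Aux



/-- Lemma 4.2 / Corollary 4.3: a `β`-critical flip sequence `B` on `K_n` with `s(B) < n`
which does not revisit any state satisfies `rank(A_B) ≥ s(B) + (β/(1+β)) s₁(B)`, and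
consequently `rank(A_B) ≥ ((1+4β)/(1+3β)) s(B)`. -/
theorem stmt8 (n : ℕ) (β : ℝ) (hβ : 0 < β) (B : List (Fin n))
    (σ₀ : Fin n → ℝ) (h : isSpin σ₀)
    (hs : sDist B < n) (hnr : noRevisit B) (hcrit : Critical β B) :
    (sDist B : ℝ) + β / (1 + β) * (sSing B : ℝ) ≤ ((moveMatrix σ₀ B).rank : ℝ) ∧
    (1 + 4 * β) / (1 + 3 * β) * (sDist B : ℝ) ≤ ((moveMatrix σ₀ B).rank : ℝ) := by
  classical
  have hw : ∃ w₀ : Fin n, B.count w₀ = 0 := by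
    by_contra hc
    push_neg at hc
    have hsub : Finset.univ ⊆ B.toFinset := by
      intro x _
      rw [List.mem_toFinset, ← List.count_pos_iff]
      have := hc x
      omega
    have hcard := Finset.card_le_card hsub
    rw [Finset.card_univ, Fintype.card_fin] at hcard
    unfold sDist at hs
    omega
  obtain ⟨w₀, hw₀⟩ := hw
  have hA := Stmt8Aux.partA hβ h w₀ hw₀ hcrit
  have hB := Stmt8Aux.partB h w₀ hw₀ hnr hcrit.1
  refine ⟨hA, ?_⟩
  have hsum : sSing B + sRep B = sDist B := by
    unfold sSing sRep sDist
    have hfe : B.toFinset.filter (fun v => 2 ≤ B.count v)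
        = B.toFinset.filter (fun v => ¬ B.count v = 1) := by
      apply Finset.filter_congr
      intro v hv
      rw [List.mem_toFinset] at hv
      have h1 := List.count_pos_iff.mpr hv
      constructor
      · intro h2
        omega
      · intro h2
        omega
    rw [hfe]
    exact Finset.card_filter_add_card_filter_not _
  have h1β : (0:ℝ) < 1 + β := by linarith
  have h3β : (0:ℝ) < 1 + 3*β := by linarith
  have e1 : (1+β)*((sDist B:ℝ) + β/(1+β)*(sSing B:ℝ))
      ≤ (1+β)*((moveMatrix σ₀ B).rank : ℝ) :=
    mul_le_mul_of_nonneg_left hA (le_of_lt h1β)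
  have e2 : (1+β)*((sDist B:ℝ) + β/(1+β)*(sSing B:ℝ))
      = (1+β)*(sDist B:ℝ) + β*(sSing B:ℝ) := by
    field_simp
  have e3 : 2*β*((sDist B:ℝ) + (sRep B:ℝ)/2)
      ≤ 2*β*((moveMatrix σ₀ B).rank : ℝ) :=
    mul_le_mul_of_nonneg_left hB (by positivity)
  have hcast : (sSing B:ℝ) + (sRep B:ℝ) = (sDist B:ℝ) := by
    exact_mod_cast congrArg (Nat.cast : ℕ → ℝ) hsum
  rw [div_mul_eq_mul_div, div_le_iff₀ h3β]
  nlinarith [e1, e2, e3, hcast]
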